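/- Let {𝒮_j}_{j=1}^q be an orthogonal (Σ_t)_{t∈T}-decorrelating partition. Then for every j ∈ {1,…,q} and every t ∈ T, the vector β* := Π_{𝒮_j} Σ_t^{-1} Π_{𝒮_j} Σ_t γ_t lies in 𝒮_j and is the unique maximizer of the explained variance over 𝒮_j: for every β ∈ 𝒮_j with β ≠ β*, ΔVar_t(β) < ΔVar_t(β*). -/

import Mathlib

open Matrix Finset MeasureTheory

noncomputable section

/-- Vectors in `ℝ^p`. -/
abbrev Vec (p : ℕ) : Type := Fin p → ℝ

/-- Real `p × p` matrices. -/
abbrev Mat (p : ℕ) : Type := Matrix (Fin p) (Fin p) ℝ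

/-- Explained variance `ΔVar(β) = 2 γᵀ C β − βᵀ C β` at a time with covariance `C`
and true parameter `γ`. -/
def dVar {p : ℕ} (C : Mat p) (γ β : Vec p) : ℝ :=
  2 * (γ ⬝ᵥ (C *ᵥ β)) - β ⬝ᵥ (C *ᵥ β)

/-- `β₀` is the unique maximizer of `f` over the linear subspace whose orthogonal
projection matrix is `P` (membership in the subspace is expressed as `P *ᵥ β = β`). -/
def IsUMaxOn {p : ℕ} (f : Vec p → ℝ) (P : Mat p) (β₀ : Vec p) : Prop :=
  P *ᵥ β₀ = β₀ ∧ ∀ β : Vec p, P *ᵥ β = β → β ≠ β₀ → f β < f β₀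

/-- The matrices `P j` are the orthogonal projection matrices of a family of pairwise
orthogonal nonzero linear subspaces of `ℝ^p` whose direct sum is `ℝ^p`. -/
structure OrthPartition (p q : ℕ) (P : Fin q → Mat p) : Prop where
  symm : ∀ j, (P j)ᵀ = P j
  idem : ∀ j, P j * P j = P j
  nonzero : ∀ j, P j ≠ 0
  orth : ∀ i j, i ≠ j → P i * P j = 0
  sum_one : ∑ j, P j = 1

/-- Lemma 2 of the paper: for an orthogonal `(Σ_t)`-decorrelating
partition, `β* := Π_j Σ_t⁻¹ Π_j Σ_t γ_t` lies in `𝒮_j` and is the unique maximizer of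
the explained variance `ΔVar_t` over `𝒮_j`. -/
theorem stmt1 {p n q : ℕ} (hp : 1 ≤ p) (hn : 1 ≤ n)
    (Cov : Fin n → Mat p) (hCov : ∀ t, (Cov t).PosDef)
    (γ : Fin n → Vec p)
    (P : Fin q → Mat p) (hP : OrthPartition p q P)
    (hdec : ∀ (t : Fin n) (i j : Fin q), i ≠ j → P i * Cov t * P j = 0) :
    ∀ (j : Fin q) (t : Fin n),
      IsUMaxOn (dVar (Cov t) (γ t)) (P j)
        ((P j * (Cov t)⁻¹ * P j * Cov t) *ᵥ γ t) := by
  intro j t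
  have hC := hCov t
  set C := Cov t with hCdef
  set Pj := P j with hPjdef
  have hCsymm : Cᵀ = C := hC.1
  have hsymm : Pjᵀ = Pj := hP.symm j
  have hidem : Pj * Pj = Pj := hP.idem j
  have hinv : Invertible C := hC.isUnit.invertible
  -- commutation of Pj with C
  have h1 : Pj * C = Pj * C * Pj := by
    calc Pj * C = Pj * C * ∑ k, P k := by rw [hP.sum_one, mul_one]
      _ = ∑ k, Pj * C * P k := by rw [Finset.mul_sum]
      _ = Pj * C * Pj := by
          rw [Finset.sum_eq_single j]
          · intro k _ hk
            exact hdec t j k (Ne.symm hk)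
          · intro h; exact absurd (Finset.mem_univ j) h
  have h2 : C * Pj = Pj * C * Pj := by
    calc C * Pj = (∑ k, P k) * C * Pj := by rw [hP.sum_one, one_mul]
      _ = ∑ k, P k * C * Pj := by rw [Finset.sum_mul, Finset.sum_mul]
      _ = Pj * C * Pj := by
          rw [Finset.sum_eq_single j]
          · intro k _ hk
            exact hdec t k j hk
          · intro h; exact absurd (Finset.mem_univ j) h
  have hcomm : Pj * C = C * Pj := by rw [h1, h2]
  have hdet : IsUnit C.det := isUnit_iff_ne_zero.mpr hC.det_pos.ne'
  have hcomm' : Pj * C⁻¹ = C⁻¹ * Pj := by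
    calc Pj * C⁻¹ = C⁻¹ * C * (Pj * C⁻¹) := by
          rw [Matrix.nonsing_inv_mul C hdet, one_mul]
      _ = C⁻¹ * (Pj * C) * C⁻¹ := by
          rw [hcomm]; simp only [Matrix.mul_assoc]
      _ = C⁻¹ * Pj * (C * C⁻¹) := by simp only [Matrix.mul_assoc]
      _ = C⁻¹ * Pj := by rw [Matrix.mul_nonsing_inv C hdet, mul_one]
  -- the key identity : Pj * C⁻¹ * Pj * C = Pj
  have hkey : Pj * C⁻¹ * Pj * C = Pj := by
    calc Pj * C⁻¹ * Pj * C = Pj * (C⁻¹ * Pj) * C := by rw [Matrix.mul_assoc Pj C⁻¹ Pj]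
      _ = Pj * (Pj * C⁻¹) * C := by rw [← hcomm']
      _ = Pj * Pj * (C⁻¹ * C) := by rw [Matrix.mul_assoc, Matrix.mul_assoc, Matrix.mul_assoc]
      _ = Pj := by
          rw [Matrix.nonsing_inv_mul C hdet,
            hidem, mul_one]
  rw [hkey]
  set b : Vec p := Pj *ᵥ γ t with hbdef
  -- helper: for β in the subspace, γ ⬝ᵥ C β = b ⬝ᵥ C β
  have hhelp : ∀ β : Vec p, Pj *ᵥ β = β → γ t ⬝ᵥ (C *ᵥ β) = b ⬝ᵥ (C *ᵥ β) := by
    intro β hβ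
    calc γ t ⬝ᵥ (C *ᵥ β) = γ t ⬝ᵥ (C *ᵥ (Pj *ᵥ β)) := by rw [hβ]
      _ = γ t ⬝ᵥ ((C * Pj) *ᵥ β) := by rw [Matrix.mulVec_mulVec]
      _ = γ t ⬝ᵥ ((Pj * C) *ᵥ β) := by rw [hcomm]
      _ = γ t ⬝ᵥ (Pj *ᵥ (C *ᵥ β)) := by rw [Matrix.mulVec_mulVec]
      _ = (γ t ᵥ* Pj) ⬝ᵥ (C *ᵥ β) := by rw [Matrix.dotProduct_mulVec]
      _ = b ⬝ᵥ (C *ᵥ β) := by rw [← hsymm, Matrix.vecMul_transpose]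
  have hbmem : Pj *ᵥ b = b := by
    rw [hbdef, Matrix.mulVec_mulVec, hidem]
  constructor
  · exact hbmem
  · intro β hβ hne
    have hd : β - b ≠ 0 := sub_ne_zero_of_ne hne
    have hpos : 0 < (β - b) ⬝ᵥ (C *ᵥ (β - b)) := by
      have := hC.dotProduct_mulVec_pos hd
      simpa using this
    have hsymdot : β ⬝ᵥ (C *ᵥ b) = b ⬝ᵥ (C *ᵥ β) := by
      rw [Matrix.dotProduct_mulVec, ← Matrix.mulVec_transpose, hCsymm,
        dotProduct_comm]
    have hexp : (β - b) ⬝ᵥ (C *ᵥ (β - b))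
        = β ⬝ᵥ (C *ᵥ β) - 2 * (b ⬝ᵥ (C *ᵥ β)) + b ⬝ᵥ (C *ᵥ b) := by
      rw [Matrix.mulVec_sub, sub_dotProduct, dotProduct_sub,
        dotProduct_sub, hsymdot]
      ring
    have h3 : dVar C (γ t) β = 2 * (b ⬝ᵥ (C *ᵥ β)) - β ⬝ᵥ (C *ᵥ β) := by
      rw [dVar, hhelp β hβ]
    have h4 : dVar C (γ t) b = b ⬝ᵥ (C *ᵥ b) := by
      rw [dVar, hhelp b hbmem]; ring
    rw [h3, h4]
    linarith
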